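/- If B' and B'' are bases in decomposed form that are joinable, then C(B') ∪ C(B'') = C(B' ∪ B''). -/

import Mathlib

namespace Consensual

/-- The double alphabet `Σ̃ = Σ × Bool`: second component `true` means the letter is dotted. -/
abbrev DLetter (S : Type) := S × Bool

variable {S : Type} [DecidableEq S]

/-- Partial match of two letters of the double alphabet:
`a @ å = å @ a = a`, `å @ å = å`, undefined otherwise. -/
def matchLetter (x y : DLetter S) : Option (DLetter S) :=
  if x.1 = y.1 ∧ (x.2 ∨ y.2) then some (x.1, x.2 && y.2) else none

/-- Letterwise partial match of two words over the double alphabet. -/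
def matchWord : List (DLetter S) → List (DLetter S) → Option (List (DLetter S))
  | [], [] => some []
  | x :: xs, y :: ys => do
      let l ← matchLetter x y
      let rest ← matchWord xs ys
      pure (l :: rest)
  | _, _ => none

/-- Elementwise match of two languages over the double alphabet. -/
def matchLang (B C : Language (DLetter S)) : Language (DLetter S) :=
  { w | ∃ u ∈ B, ∃ v ∈ C, matchWord u v = some w }

/-- Iterated match `B^{i@}`. -/
def matchIter (B : Language (DLetter S)) : ℕ → Language (DLetter S)
  | 0 => B
  | i + 1 => matchLang (matchIter B i) B

/-- Match closure `B^@ = ⋃ i, B^{i@}`. -/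
def matchClosure (B : Language (DLetter S)) : Language (DLetter S) :=
  ⨆ i, matchIter B i

/-- The embedding of a word over `Σ` as an undotted word over `Σ̃`. -/
def undotWord (w : List S) : List (DLetter S) := w.map (fun a => (a, false))

/-- The consensual language `C(B) = B^@ ∩ Σ*` with base `B`, as a language over `Σ`. -/
def Cons (B : Language (DLetter S)) : Language S :=
  { w | undotWord w ∈ matchClosure B }

/-- A word consisting only of dotted letters. -/
def allDotted (w : List (DLetter S)) : Prop := ∀ l ∈ w, l.2 = true

/-- `Σ̊*`, the language of all-dotted words (including ε). -/
def dottedStar : Language (DLetter S) := { w | allDotted w }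

/-- `B ⊆ Σ̃* − Σ̊⁺`: no nonempty all-dotted word belongs to `B`. -/
def ProperBase (B : Language (DLetter S)) : Prop :=
  ∀ w ∈ B, w ≠ [] → ¬ allDotted w

/-- `B` is in decomposed form with scaffold `sc` and fill `fl`. -/
def IsDecomposed (B sc fl : Language (DLetter S)) : Prop :=
  ProperBase B ∧ B = sc ⊔ fl ∧ Disjoint sc fl ∧
    Cons fl = (⊥ : Language S) ∧ matchLang sc sc = (⊥ : Language (DLetter S))

/-- Two decomposed bases `sc' ⊔ fl'` and `sc'' ⊔ fl''` are joinable. -/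
def Joinable (sc' fl' sc'' fl'' : Language (DLetter S)) : Prop :=
  IsDecomposed ((sc' ⊔ fl') ⊔ (sc'' ⊔ fl'')) (sc' ⊔ sc'') (fl' ⊔ fl'') ∧
    matchLang sc' fl'' = (⊥ : Language (DLetter S)) ∧
    matchLang sc'' fl' = (⊥ : Language (DLetter S))

/-- `dot`: make every letter of a word dotted. -/
def dotWord (w : List (DLetter S)) : List (DLetter S) := w.map (fun l => (l.1, true))

/-- The dot-product `B' ⊙ B'' = (sc'·sc'') ⊔ fl' ⊔ fl''` of two decomposed bases. -/
def dotProduct (sc' fl' sc'' fl'' : Language (DLetter S)) : Language (DLetter S) :=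
  (sc' * sc'') ⊔ fl' ⊔ fl''

/-- Two decomposed bases `sc' ⊔ fl'` and `sc'' ⊔ fl''` are concatenable. -/
def Concatenable (sc' fl' sc'' fl'' : Language (DLetter S)) : Prop :=
  IsDecomposed (dotProduct sc' fl' sc'' fl'') (sc' * sc'') (fl' ⊔ fl'') ∧
  (∀ w' : List (DLetter S), w' ≠ [] → ∀ y' ∈ sc', ∀ y'' ∈ sc'',
    ((∃ x' ∈ fl', w' = x' ++ dotWord y'' ∧ (matchWord x' y').isSome) ↔
      (w' ∈ fl' ∧ (matchWord w' (y' ++ y'')).isSome))) ∧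
  (∀ w'' : List (DLetter S), w'' ≠ [] → ∀ y' ∈ sc', ∀ y'' ∈ sc'',
    ((∃ x'' ∈ fl'', w'' = dotWord y' ++ x'' ∧ (matchWord x'' y'').isSome) ↔
      (w'' ∈ fl'' ∧ (matchWord w'' (y' ++ y'')).isSome)))

/-! ### Slots, scaffolds and fills -/

/-- The word `å a^{r−1} å a^{m−r−1}`. -/
def slotWord (m r : ℕ) (a : S) : List (DLetter S) :=
  (a, true) :: (List.replicate (r - 1) (a, false) ++
    (a, true) :: List.replicate (m - r - 1) (a, false))

/-- `R_m(a) = {å a^{r−1} å a^{m−r−1} : r ∈ R}`. -/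
def Rm (m : ℕ) (R : Set ℕ) (a : S) : Language (DLetter S) :=
  { w | ∃ r ∈ R, w = slotWord m r a }

/-- Projection of a word over `Σ̃` on the two-letter alphabet `{a, å}`. -/
def projA (a : S) (x : List (DLetter S)) : List (DLetter S) :=
  x.filter (fun l => decide (l.1 = a))

/-- The scaffold language `sc_{R,m}`. -/
def scaffold (m : ℕ) (R : Set ℕ) : Language (DLetter S) :=
  { x | ∀ a : S, projA a x ∈ KStar.kstar (Rm m R a ⊔ {[(a, false)]}) }

/-- `switch`: interchange `a` and `å` in every position. -/
def switchWord (w : List (DLetter S)) : List (DLetter S) := w.map (fun l => (l.1, !l.2))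

/-- The fill language `fl_{R,m} = switch(sc_{R,m}) − Σ̊*`. -/
def fill (m : ℕ) (R : Set ℕ) : Language (DLetter S) :=
  { w | ∃ u ∈ scaffold (S := S) m R, w = switchWord u } \ dottedStar

/-- A language is shiftable if it absorbs all-dotted padding on both sides. -/
def Shiftable (F : Language (DLetter S)) : Prop :=
  F = dottedStar * F * dottedStar

/-- `R` is a set of slots of module `m`. -/
def SlotSet (m : ℕ) (R : Set ℕ) : Prop :=
  4 ≤ m ∧ 2 ∣ m ∧ R.Nonempty ∧ ∀ r ∈ R, 1 ≤ r ∧ r ≤ m / 2 - 1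

/-- The factor `α(i)…α(i+m−1)` of `α` (positions numbered from 1). -/
def factorAt (α : List (DLetter S)) (i m : ℕ) : List (DLetter S) :=
  (α.drop (i - 1)).take m

/-- `i` is a restarting point of `α ∈ π_ã(sc_{R,m})`. -/
def RestartScaffold (m : ℕ) (R : Set ℕ) (a : S) (α : List (DLetter S)) (i : ℕ) : Prop :=
  1 ≤ i ∧ i + m - 1 ≤ α.length ∧ factorAt α i m ∈ Rm m R a

/-- `i` is a restarting point of `α ∈ π_ã(fl_{R̂,m})`. -/
def RestartFill (m : ℕ) (Rh : Set ℕ) (a : S) (α : List (DLetter S)) (i : ℕ) : Prop :=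
  1 ≤ i ∧ i + m - 1 ≤ α.length ∧ (∃ u ∈ Rm m Rh a, factorAt α i m = switchWord u)

/-! ### Parikh images, COM-SLIP, and the family C(⊔,·) -/

/-- The Parikh image of a word. -/
def parikh (w : List S) : S → ℕ := fun a => w.count a

/-- A linear subset of `ℕ^Σ`. -/
def IsLinearSet (T : Set (S → ℕ)) : Prop :=
  ∃ (q : ℕ) (c : S → ℕ) (p : Fin q → S → ℕ),
    T = { v | ∃ n : Fin q → ℕ, v = c + ∑ i, n i • p i }

/-- A semilinear subset of `ℕ^Σ`: a finite union of linear sets. -/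
def IsSemilinearSet (T : Set (S → ℕ)) : Prop :=
  ∃ (t : ℕ) (f : Fin t → Set (S → ℕ)), (∀ i, IsLinearSet (f i)) ∧ T = ⋃ i, f i

/-- A commutative language: membership only depends on the Parikh image. -/
def CommutativeLang (L : Language S) : Prop :=
  ∀ w ∈ L, ∀ v : List S, parikh v = parikh w → v ∈ L

/-- A COM-SLIP language: commutative with semilinear Parikh image. -/
def IsComSlip (L : Language S) : Prop :=
  CommutativeLang L ∧ IsSemilinearSet (parikh '' L)

/-- The family `C(⊔,·)`: the smallest family containing the COM-SLIP languages and
closed under binary union and concatenation. -/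
inductive CUC {S : Type} [DecidableEq S] : Language S → Prop
  | base {L : Language S} : IsComSlip L → CUC L
  | union {L M : Language S} : CUC L → CUC M → CUC (L ⊔ M)
  | concat {L M : Language S} : CUC L → CUC M → CUC (L * M)

/-- Regular languages, via acceptance by a DFA with finitely many states. -/
def IsRegularLang {γ : Type} (B : Language γ) : Prop :=
  ∃ (σ : Type) (_ : Fintype σ) (M : DFA γ σ), M.accepts = B

/-! ### Shuffle, appending, and the base `D` for a COM-LIP language -/

/-- `IsShuffle x y z`: `z` is an interleaving of `x` and `y`. -/
inductive IsShuffle {γ : Type} : List γ → List γ → List γ → Prop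
  | nil : IsShuffle [] [] []
  | left {x : γ} {xs ys zs} : IsShuffle xs ys zs → IsShuffle (x :: xs) ys (x :: zs)
  | right {y : γ} {xs ys zs} : IsShuffle xs ys zs → IsShuffle xs (y :: ys) (y :: zs)

/-- The shuffle of two languages. -/
def shuffleLang {γ : Type} (L M : Language γ) : Language γ :=
  { z | ∃ x ∈ L, ∃ y ∈ M, IsShuffle x y z }

/-- Split `w` as `u·v` where `v` is the longest suffix of `w` with no occurrence
of `a` or `å`; returns `(u, v)`. -/
def splitSuffix (a : S) (w : List (DLetter S)) : List (DLetter S) × List (DLetter S) :=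
  ((w.reverse.dropWhile (fun l => decide (l.1 ≠ a))).reverse,
   (w.reverse.takeWhile (fun l => decide (l.1 ≠ a))).reverse)

/-- The append operation `B ◁ A` for `A ⊆ a⁺`. -/
def appendA (a : S) (B : Language (DLetter S)) (A : Language S) : Language (DLetter S) :=
  { w' | ∃ w ∈ B, ∃ s ∈ A, ∃ z, IsShuffle (splitSuffix a w).2 (undotWord s) z ∧
      w' = (splitSuffix a w).1 ++ z }

/-- Projection of a language over `Σ` on the single letter `a`. -/
def projLetter (a : S) (F : Language S) : Language S :=
  { y | ∃ w ∈ F, y = w.filter (fun l => decide (l = a)) }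

/-- Letter-by-letter appending `B ◁ F` (over the alphabet `Fin k`,
processing the letters `a₁, …, a_k` in order). -/
def lblAppend {k : ℕ} (B : Language (DLetter (Fin k))) (F : Language (Fin k)) :
    Language (DLetter (Fin k)) :=
  (List.finRange k).foldl (fun Bc a => appendA a Bc (projLetter a F)) B

/-- Projection of a word over `Σ̃` on the undotted letters. -/
def projSigma (x : List (DLetter S)) : List S :=
  (x.filter (fun l => !l.2)).map Prod.fst

/-- The fill part `X` of the decomposed base for a COM-LIP language with periods `p`. -/
def Xlang {k q : ℕ} (m r : ℕ) (p : Fin q → Fin k → ℕ) : Language (DLetter (Fin k)) :=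
  { x | x ∈ fill m {r} ∧ ∃ i : Fin q, parikh (projSigma x) = p i }

/-- `Y = (R_m(a₁))* ⧢ … ⧢ (R_m(a_k))*`. -/
def Ylang (k : ℕ) (m : ℕ) (R : Set ℕ) : Language (DLetter (Fin k)) :=
  (List.finRange k).foldl
    (fun acc a => shuffleLang acc (KStar.kstar (Rm m R a))) (1 : Language (DLetter (Fin k)))

/-- The finite commutative language `W` with Parikh image
`{c + h₁p⁽¹⁾ + … + h_qp⁽q⁾ : 0 ≤ hⱼ < m/2}`. -/
def Wlang {k q : ℕ} (m : ℕ) (c : Fin k → ℕ) (p : Fin q → Fin k → ℕ) : Language (Fin k) :=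
  { w | ∃ h : Fin q → ℕ, (∀ i, h i < m / 2) ∧ parikh w = c + ∑ i, h i • p i }

/-- The decomposed base `D = X ⊔ (Y ◁ W)` for a COM-LIP language. -/
def Dlang {k q : ℕ} (m r : ℕ) (c : Fin k → ℕ) (p : Fin q → Fin k → ℕ) :
    Language (DLetter (Fin k)) :=
  Xlang m r p ⊔ lblAppend (Ylang k m {r}) (Wlang m c p)

/-- `matchListAll [x₁, …, x_n] = some u` iff `u = x₁ @ x₂ @ … @ x_n`. -/
def matchListAll : List (List (DLetter S)) → Option (List (DLetter S))
  | [] => none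
  | [x] => some x
  | x :: xs => (matchListAll xs).bind (fun u => matchWord x u)


/-! ### Auxiliary lemmas for the proof -/

-- aux lemmas
lemma matchLetter_comm (x y : DLetter S) : matchLetter x y = matchLetter y x := by
  obtain ⟨xa, xb⟩ := x; obtain ⟨ya, yb⟩ := y
  by_cases h : xa = ya
  · subst h; cases xb <;> cases yb <;> simp [matchLetter]
  · simp [matchLetter, h, Ne.symm h]

lemma matchWord_comm : ∀ x y : List (DLetter S), matchWord x y = matchWord y x := by
  intro x
  induction x with
  | nil => intro y; cases y <;> simp [matchWord]
  | cons a as ih => intro y; cases y <;> simp [matchWord, matchLetter_comm, ih]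

lemma matchLetter_absorb {a b l y : DLetter S} (h : matchLetter a b = some l)
    (h2 : (matchLetter l y).isSome) : (matchLetter a y).isSome := by
  unfold matchLetter at *
  split_ifs at h with h1
  · cases h
    split_ifs at h2 with h3
    · simp only [Option.isSome]
      split_ifs with h4
      · rfl
      · exfalso; apply h4
        refine ⟨h3.1, ?_⟩
        rcases h3.2 with hb | hy
        · exact Or.inl (by simpa using (Bool.and_eq_true _ _ |>.mp hb).1)
        · exact Or.inr hy
    · simp at h2

lemma matchWord_absorb : ∀ {a b u y : List (DLetter S)}, matchWord a b = some u →
    (matchWord u y).isSome → (matchWord a y).isSome := by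
  intro a
  induction a with
  | nil =>
    intro b u y h h2
    cases b with
    | nil =>
      simp only [matchWord, Option.some_inj] at h
      subst h
      cases y with
      | nil => simp [matchWord]
      | cons _ _ => simp [matchWord] at h2
    | cons _ _ => simp [matchWord] at h
  | cons x xs ih =>
    intro b u y h h2
    cases b with
    | nil => simp [matchWord] at h
    | cons b bs =>
      simp only [matchWord, Option.bind_eq_bind, Option.bind_eq_some_iff, Option.pure_def,
        Option.some_inj] at h
      obtain ⟨l, hl, rest, hrest, rfl⟩ := h
      cases y with
      | nil => simp [matchWord] at h2
      | cons y ys =>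
        rw [Option.isSome_iff_exists] at h2
        obtain ⟨z, hz⟩ := h2
        simp only [matchWord, Option.bind_eq_bind, Option.bind_eq_some_iff, Option.pure_def,
          Option.some_inj] at hz
        obtain ⟨l2, hl2, rest2, hrest2, rfl⟩ := hz
        have hletter : (matchLetter x y).isSome :=
          matchLetter_absorb hl (by simp [hl2])
        have hword : (matchWord xs ys).isSome :=
          ih hrest (by simp [hrest2])
        rw [Option.isSome_iff_exists] at hletter hword
        obtain ⟨l3, hl3⟩ := hletter
        obtain ⟨r3, hr3⟩ := hword
        simp [matchWord, hl3, hr3]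

/-- `u` is the match of the nonempty list `xs` of words. -/
inductive MOf : List (List (DLetter S)) → List (DLetter S) → Prop
  | single (x : List (DLetter S)) : MOf [x] x
  | cons {xs u v w} : MOf xs u → matchWord u v = some w → MOf (v :: xs) w

lemma mof_absorb {xs : List (List (DLetter S))} {u : List (DLetter S)} (h : MOf xs u) :
    ∀ x ∈ xs, ∀ y, (matchWord u y).isSome → (matchWord x y).isSome := by
  induction h with
  | single x => intro x' hx' y hy; simp at hx'; subst hx'; exact hy
  | cons h1 h2 ih =>
    intro x hx y hy
    rename_i xs u v w
    have huy : (matchWord u y).isSome := matchWord_absorb h2 hy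
    rcases List.mem_cons.mp hx with rfl | hx
    · exact matchWord_absorb (matchWord_comm u x ▸ h2) hy
    · exact ih x hx y huy

lemma mof_pairwise {xs : List (List (DLetter S))} {w : List (DLetter S)} (h : MOf xs w) :
    xs.Pairwise (fun x y => (matchWord x y).isSome) := by
  induction h with
  | single x => simp
  | cons h1 h2 ih =>
    refine List.Pairwise.cons ?_ ih
    intro x hx
    have := mof_absorb h1 x hx _ (Option.isSome_iff_exists.mpr ⟨_, h2⟩)
    rwa [matchWord_comm]

lemma mof_mem_iter {B : Language (DLetter S)} {xs : List (List (DLetter S))}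
    {w : List (DLetter S)} (h : MOf xs w) (hmem : ∀ x ∈ xs, x ∈ B) :
    ∃ i, w ∈ matchIter B i := by
  induction h with
  | single x => exact ⟨0, hmem x (by simp)⟩
  | cons h1 h2 ih =>
    rename_i xs u v w
    obtain ⟨i, hi⟩ := ih (fun x hx => hmem x (by simp [hx]))
    exact ⟨i + 1, ⟨u, hi, v, hmem v (by simp), h2⟩⟩

lemma iter_mof {B : Language (DLetter S)} {i : ℕ} {w : List (DLetter S)}
    (h : w ∈ matchIter B i) : ∃ xs, (∀ x ∈ xs, x ∈ B) ∧ MOf xs w := by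
  induction i generalizing w with
  | zero => exact ⟨[w], by simpa [matchIter] using h, MOf.single w⟩
  | succ i ih =>
    obtain ⟨u, hu, v, hv, huv⟩ := h
    obtain ⟨xs, hxs, hmof⟩ := ih hu
    refine ⟨v :: xs, ?_, MOf.cons hmof huv⟩
    intro x hx
    rcases List.mem_cons.mp hx with rfl | hx
    · exact hv
    · exact hxs x hx

lemma matchIter_mono {B C : Language (DLetter S)} (h : B ≤ C) (i : ℕ) :
    matchIter B i ≤ matchIter C i := by
  induction i with
  | zero => exact h
  | succ i ih =>
    intro w hw
    obtain ⟨u, hu, v, hv, huv⟩ := hw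
    exact ⟨u, ih hu, v, h hv, huv⟩


lemma mem_matchClosure {B : Language (DLetter S)} {w : List (DLetter S)} :
    w ∈ matchClosure B ↔ ∃ i, w ∈ matchIter B i := Language.mem_iSup

lemma matchWord_symm_rel : Symmetric (fun x y : List (DLetter S) => (matchWord x y).isSome) := by
  intro x y h
  rwa [matchWord_comm]


/-- if `B' = sc' ∪ fl'` and `B'' = sc'' ∪ fl''` are decomposed bases that
are joinable, then `C(B') ∪ C(B'') = C(B' ∪ B'')`. -/
theorem cons_union_of_joinable (sc' fl' sc'' fl'' : Language (DLetter S))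
    (h' : IsDecomposed (sc' ⊔ fl') sc' fl')
    (h'' : IsDecomposed (sc'' ⊔ fl'') sc'' fl'')
    (hj : Joinable sc' fl' sc'' fl'') :
    Cons (sc' ⊔ fl') ⊔ Cons (sc'' ⊔ fl'') = Cons ((sc' ⊔ fl') ⊔ (sc'' ⊔ fl'')) := by
  obtain ⟨⟨hprop, heqB, hdisj, hconsfl, hscsc⟩, hsf'', hsf'⟩ := hj
  apply le_antisymm
  · apply sup_le <;>
    · intro w hw
      obtain ⟨i, hi⟩ := mem_matchClosure.mp hw
      exact mem_matchClosure.mpr ⟨i, matchIter_mono (by simp) i hi⟩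
  · intro w hw
    obtain ⟨i, hi⟩ := mem_matchClosure.mp hw
    obtain ⟨xs, hxs, hmof⟩ := iter_mof hi
    have hpw := mof_pairwise hmof
    have hforall := haveI : Std.Symm (fun x y : List (DLetter S) => (matchWord x y).isSome) :=
      ⟨fun a b h => matchWord_symm_rel h⟩; hpw.forall
    by_cases hs : ∃ s ∈ xs, s ∈ (sc' ⊔ sc'' : Language (DLetter S))
    · obtain ⟨s, hsmem, hssc⟩ := hs
      -- a generic argument for each side
      rcases hssc with hssc | hssc
      · -- all words are in sc' ⊔ fl'
        have hall : ∀ x ∈ xs, x ∈ (sc' ⊔ fl' : Language (DLetter S)) := by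
          intro x hx
          rcases hxs x hx with hxB | hxB
          · exact hxB
          · by_cases hxeq : x = s
            · exact Or.inl (hxeq ▸ hssc)
            · have hm : (matchWord s x).isSome := hforall hsmem hx (fun h => hxeq h.symm)
              obtain ⟨z, hz⟩ := Option.isSome_iff_exists.mp hm
              exfalso
              rcases hxB with hxB | hxB
              · have : z ∈ matchLang (sc' ⊔ sc'') (sc' ⊔ sc'') :=
                  ⟨s, Or.inl hssc, x, Or.inr hxB, hz⟩
                rw [hscsc] at this
                exact this
              · have : z ∈ matchLang sc' fl'' := ⟨s, hssc, x, hxB, hz⟩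
                rw [hsf''] at this
                exact this
        obtain ⟨j, hj⟩ := mof_mem_iter hmof hall
        exact Or.inl (mem_matchClosure.mpr ⟨j, hj⟩)
      · have hall : ∀ x ∈ xs, x ∈ (sc'' ⊔ fl'' : Language (DLetter S)) := by
          intro x hx
          rcases hxs x hx with hxB | hxB
          · by_cases hxeq : x = s
            · exact Or.inl (hxeq ▸ hssc)
            · have hm : (matchWord s x).isSome := hforall hsmem hx (fun h => hxeq h.symm)
              obtain ⟨z, hz⟩ := Option.isSome_iff_exists.mp hm
              exfalso
              rcases hxB with hxB | hxB
              · have : z ∈ matchLang (sc' ⊔ sc'') (sc' ⊔ sc'') :=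
                  ⟨s, Or.inr hssc, x, Or.inl hxB, hz⟩
                rw [hscsc] at this
                exact this
              · have : z ∈ matchLang sc'' fl' := ⟨s, hssc, x, hxB, hz⟩
                rw [hsf'] at this
                exact this
          · exact hxB
        obtain ⟨j, hj⟩ := mof_mem_iter hmof hall
        exact Or.inr (mem_matchClosure.mpr ⟨j, hj⟩)
    · push_neg at hs
      exfalso
      have hall : ∀ x ∈ xs, x ∈ (fl' ⊔ fl'' : Language (DLetter S)) := by
        intro x hx
        have hxB : x ∈ ((sc' ⊔ sc'') ⊔ (fl' ⊔ fl'') : Language (DLetter S)) := by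
          rw [← heqB]; exact hxs x hx
        rcases hxB with hxB | hxB
        · exact absurd hxB (hs x hx)
        · exact hxB
      obtain ⟨j, hj⟩ := mof_mem_iter hmof hall
      have : w ∈ Cons (fl' ⊔ fl'') := mem_matchClosure.mpr ⟨j, hj⟩
      rw [hconsfl] at this
      exact this


end Consensual
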